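/- For any Q ∈ P_K(O(d)) and any X ∈ ℝ^{nd×Kd}: a matrix W ∈ F minimizes ‖W − X‖_F over F if and only if W·Q minimizes ‖W' − X·Q‖_F over W' ∈ F. In particular, Π_F(X·Q) = Π_F(X)·Q as sets of minimizers. -/

import Mathlib

open Matrix BigOperators Finset

/-- Frobenius norm of a real matrix. -/
noncomputable def frobNorm {a b : Type*} [Fintype a] [Fintype b]
    (X : Matrix a b ℝ) : ℝ :=
  Real.sqrt (∑ i, ∑ j, X i j ^ 2)

/-- `Q` belongs to the real orthogonal group `O(d)`. -/
def IsOrthoMat {d : ℕ} (Q : Matrix (Fin d) (Fin d) ℝ) : Prop :=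
  Q * Qᵀ = 1 ∧ Qᵀ * Q = 1

/-- `Q` belongs to the special orthogonal group `SO(d)`. -/
def IsSpecOrthoMat {d : ℕ} (Q : Matrix (Fin d) (Fin d) ℝ) : Prop :=
  IsOrthoMat Q ∧ Q.det = 1

/-- The `(i,j)`-th `d × d` block of a block matrix. -/
def blockOf {n K d : ℕ} (X : Matrix (Fin n × Fin d) (Fin K × Fin d) ℝ)
    (i : Fin n) (j : Fin K) : Matrix (Fin d) (Fin d) ℝ :=
  fun a b => X (i, a) (j, b)

/-- The singular values of a real `d × d` matrix: square roots of the
eigenvalues of the Gram matrix `Xᴴ X`. -/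
noncomputable def singVals {d : ℕ} (X : Matrix (Fin d) (Fin d) ℝ) : Fin d → ℝ :=
  fun k => Real.sqrt ((show (Xᵀ * X).IsHermitian by
    simpa [Matrix.conjTranspose_eq_transpose_of_trivial] using
      Matrix.isHermitian_conjTranspose_mul_self X).eigenvalues k)

/-- Nuclear norm: the sum of the singular values. -/
noncomputable def nuclearNorm {d : ℕ} (X : Matrix (Fin d) (Fin d) ℝ) : ℝ :=
  ∑ k, singVals X k

/-- The map `μ` sending `X` to its `n × K` matrix of blockwise nuclear norms. -/
noncomputable def muMap {n K d : ℕ} (X : Matrix (Fin n × Fin d) (Fin K × Fin d) ℝ) :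
    Matrix (Fin n) (Fin K) ℝ :=
  fun i j => nuclearNorm (blockOf X i j)

/-- `H` is a clustering matrix: 0/1 entries, each row sums to 1, each column sums to `m`. -/
def IsClusteringMatrix {n K : ℕ} (m : ℕ) (H : Matrix (Fin n) (Fin K) ℝ) : Prop :=
  (∀ i j, H i j = 0 ∨ H i j = 1) ∧ (∀ i, ∑ j, H i j = 1) ∧ (∀ j, ∑ i, H i j = (m : ℝ))

/-- `V = (1_{1×K} ⊗ R) ⊙ (H ⊗ 1_{d×d})`: the `(i,j)`-th `d × d` block is `H i j • R i`. -/
def buildV {n K d : ℕ} (R : Fin n → Matrix (Fin d) (Fin d) ℝ)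
    (H : Matrix (Fin n) (Fin K) ℝ) : Matrix (Fin n × Fin d) (Fin K × Fin d) ℝ :=
  fun p q => H p.1 q.1 * R p.1 p.2 q.2

/-- Membership in the set `F` (resp. `E` if `G = SO(d)`): `V` is built from
blocks `R i ∈ G` and a clustering matrix `H`. -/
def InFeas {n K d : ℕ} (m : ℕ) (G : Matrix (Fin d) (Fin d) ℝ → Prop)
    (V : Matrix (Fin n × Fin d) (Fin K × Fin d) ℝ) : Prop :=
  ∃ (R : Fin n → Matrix (Fin d) (Fin d) ℝ) (H : Matrix (Fin n) (Fin K) ℝ),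
    (∀ i, G (R i)) ∧ IsClusteringMatrix m H ∧ V = buildV R H

/-- Membership in `F`: blocks in `O(d)`. -/
def InF {n K d : ℕ} (m : ℕ) (V : Matrix (Fin n × Fin d) (Fin K × Fin d) ℝ) : Prop :=
  InFeas m IsOrthoMat V

/-- Membership in `P_K(G)`: `M = bdiag(U₁,…,U_K) (P ⊗ I_d)` with `U_k ∈ G`
and `P` a permutation matrix, i.e. the `(a,b)` block of `M` is `U a` if `a = π b`, else `0`. -/
def InPK {K d : ℕ} (G : Matrix (Fin d) (Fin d) ℝ → Prop)
    (M : Matrix (Fin K × Fin d) (Fin K × Fin d) ℝ) : Prop :=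
  ∃ (U : Fin K → Matrix (Fin d) (Fin d) ℝ) (π : Equiv.Perm (Fin K)),
    (∀ k, G (U k)) ∧ ∀ p q, M p q = if p.1 = π q.1 then U p.1 p.2 q.2 else 0

/-- `dist_G(V₁,V₂) = min_{Q ∈ P_K(G)} ‖V₁ - V₂ Q‖_F` (the minimum is attained
since `P_K(G)` is compact; we express it as an infimum). -/
noncomputable def distG {n K d : ℕ} (G : Matrix (Fin d) (Fin d) ℝ → Prop)
    (V₁ V₂ : Matrix (Fin n × Fin d) (Fin K × Fin d) ℝ) : ℝ :=
  sInf {r | ∃ Q, InPK G Q ∧ r = frobNorm (V₁ - V₂ * Q)}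

/-- Estimation error `ε_G(V)` with respect to a ground truth `Vstar`. -/
noncomputable def epsG {n K d : ℕ} (G : Matrix (Fin d) (Fin d) ℝ → Prop)
    (Vstar V : Matrix (Fin n × Fin d) (Fin K × Fin d) ℝ) : ℝ :=
  distG G V Vstar


section Aux

open Matrix

lemma frob_eq_trace {a b : Type*} [Fintype a] [Fintype b]
    (X : Matrix a b ℝ) : ∑ i, ∑ j, X i j ^ 2 = Matrix.trace (X * Xᵀ) := by
  simp [Matrix.trace, Matrix.mul_apply, Matrix.diag, sq]

lemma pk_mul_transpose_eq_one {K d : ℕ} {Q : Matrix (Fin K × Fin d) (Fin K × Fin d) ℝ}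
    (hQ : InPK IsOrthoMat Q) : Q * Qᵀ = 1 := by
  obtain ⟨U, π, hU, hM⟩ := hQ
  ext ⟨a, c⟩ ⟨b, e⟩
  simp only [Matrix.mul_apply, Matrix.transpose_apply, Fintype.sum_prod_type, hM]
  have hterm : ∀ k : Fin K, ∀ f : Fin d,
      (if a = π k then U a c f else 0) * (if b = π k then U b e f else 0)
        = if k = π.symm a then (if a = b then U a c f * U a e f else 0) else 0 := by
    intro k f
    rcases eq_or_ne k (π.symm a) with hk | hk
    · subst hk
      simp only [Equiv.apply_symm_apply, if_true]
      rcases eq_or_ne a b with hab | hab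
      · subst hab; simp
      · simp [hab, Ne.symm hab]
    · have h1 : a ≠ π k := by
        intro h; exact hk (by simp [h])
      simp [h1, hk]
  have : ∀ k : Fin K, (∑ f, (if a = π k then U a c f else 0) * (if b = π k then U b e f else 0))
      = if k = π.symm a then (if a = b then ∑ f, U a c f * U a e f else 0) else 0 := by
    intro k
    rw [Finset.sum_congr rfl (fun f _ => hterm k f)]
    split_ifs <;> simp
  rw [Finset.sum_congr rfl (fun k _ => this k), Finset.sum_ite_eq' Finset.univ (π.symm a)]
  have horth := (hU a).1
  have hval : ∑ f, U a c f * U a e f = (1 : Matrix (Fin d) (Fin d) ℝ) c e := by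
    rw [← horth]; simp [Matrix.mul_apply, Matrix.transpose_apply]
  simp only [Finset.mem_univ, if_true, hval]
  rcases eq_or_ne a b with hab | hab
  · subst hab
    rcases eq_or_ne c e with hce | hce
    · subst hce; simp [Matrix.one_apply]
    · simp [Matrix.one_apply, hce, Prod.ext_iff]
  · simp [Matrix.one_apply, hab, Prod.ext_iff]

lemma pk_transpose {K d : ℕ} {Q : Matrix (Fin K × Fin d) (Fin K × Fin d) ℝ}
    (hQ : InPK IsOrthoMat Q) : InPK IsOrthoMat Qᵀ := by
  obtain ⟨U, π, hU, hM⟩ := hQ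
  refine ⟨fun a => (U (π a))ᵀ, π.symm, fun a => ?_, fun p q => ?_⟩
  · obtain ⟨h1, h2⟩ := hU (π a)
    exact ⟨by simpa using h2, by simpa using h1⟩
  · show Q q p = _
    rw [hM]
    rcases eq_or_ne q.1 (π p.1) with h | h
    · simp [h, Matrix.transpose_apply]
    · have h2 : p.1 ≠ π.symm q.1 := by
        intro hh; exact h (by simp [hh])
      simp [h, h2]

lemma frob_mul_ortho {a K d : ℕ} (A : Matrix (Fin a × Fin d) (Fin K × Fin d) ℝ)
    {Q : Matrix (Fin K × Fin d) (Fin K × Fin d) ℝ} (hQ : Q * Qᵀ = 1) :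
    frobNorm (A * Q) = frobNorm A := by
  unfold frobNorm
  congr 1
  rw [frob_eq_trace, frob_eq_trace, Matrix.transpose_mul]
  have : A * Q * (Qᵀ * Aᵀ) = A * (Q * Qᵀ) * Aᵀ := by
    rw [← Matrix.mul_assoc, Matrix.mul_assoc A Q Qᵀ]
  rw [this, hQ, Matrix.mul_one]

lemma cluster_row {n K m : ℕ} {H : Matrix (Fin n) (Fin K) ℝ}
    (hH : IsClusteringMatrix m H) (i : Fin n) :
    ∃ j, H i j = 1 ∧ ∀ k, H i k = 1 → k = j := by
  obtain ⟨h01, hrow, _⟩ := hH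
  have hex : ∃ j, H i j = 1 := by
    by_contra h
    push_neg at h
    have hz : ∀ j, H i j = 0 := fun j => (h01 i j).resolve_right (h j)
    have := hrow i
    rw [Finset.sum_eq_zero (fun j _ => hz j)] at this
    norm_num at this
  obtain ⟨j, hj⟩ := hex
  refine ⟨j, hj, fun k hk => ?_⟩
  by_contra hne
  have hsum : ∑ l ∈ ({k, j} : Finset (Fin K)), H i l = 2 := by
    rw [Finset.sum_pair hne, hj, hk]; norm_num
  have hle : ∑ l ∈ ({k, j} : Finset (Fin K)), H i l ≤ ∑ l, H i l :=
    Finset.sum_le_sum_of_subset_of_nonneg (Finset.subset_univ _)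
      (fun l _ _ => by rcases h01 i l with h | h <;> rw [h] <;> norm_num)
  rw [hrow i, hsum] at hle
  norm_num at hle

lemma inF_mul_pk {n K d m : ℕ} {W : Matrix (Fin n × Fin d) (Fin K × Fin d) ℝ}
    {Q : Matrix (Fin K × Fin d) (Fin K × Fin d) ℝ}
    (hW : InF m W) (hQ : InPK IsOrthoMat Q) : InF m (W * Q) := by
  obtain ⟨R, H, hR, hH, rfl⟩ := hW
  obtain ⟨U, π, hU, hM⟩ := hQ
  choose jf hj1 hj2 using fun i => cluster_row hH i
  refine ⟨fun i => R i * U (jf i), fun i b => H i (π b), fun i => ?_, ?_, ?_⟩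
  · obtain ⟨hR1, hR2⟩ := hR i
    obtain ⟨hU1, hU2⟩ := hU (jf i)
    constructor
    · rw [Matrix.transpose_mul, ← Matrix.mul_assoc, Matrix.mul_assoc (R i), hU1,
        Matrix.mul_one, hR1]
    · rw [Matrix.transpose_mul, ← Matrix.mul_assoc, Matrix.mul_assoc _ (R i)ᵀ, hR2,
        Matrix.mul_one, hU2]
  · obtain ⟨h01, hrow, hcol⟩ := hH
    refine ⟨fun i b => h01 i (π b), fun i => ?_, fun b => hcol (π b)⟩
    simpa using (Equiv.sum_comp π (H i)).trans (hrow i)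
  · ext ⟨i, c⟩ ⟨b, e⟩
    show (buildV R H * Q) (i, c) (b, e) = _
    simp only [Matrix.mul_apply, Fintype.sum_prod_type, hM, buildV]
    have hterm : ∀ k : Fin K, ∀ f : Fin d,
        H i k * R i c f * (if k = π b then U k f e else 0)
          = if k = π b then H i k * R i c f * U k f e else 0 := by
      intro k f; split_ifs <;> simp
    have hk : ∀ k : Fin K,
        (∑ f, H i k * R i c f * (if k = π b then U k f e else 0))
          = if k = π b then ∑ f, H i k * R i c f * U k f e else 0 := by
      intro k
      rw [Finset.sum_congr rfl (fun f _ => hterm k f)]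
      split_ifs <;> simp
    rw [Finset.sum_congr rfl (fun k _ => hk k), Finset.sum_ite_eq' Finset.univ (π b)]
    simp only [Finset.mem_univ, if_true]
    rcases (hH.1 i (π b)) with h0 | h1
    · simp [h0]
    · have hpb : π b = jf i := hj2 i (π b) h1
      rw [h1, hpb]
      simp only [one_mul, Matrix.mul_apply]

end Aux

/-- for `Q ∈ P_K(O(d))` and `X ∈ ℝ^{nd×Kd}`, `W ∈ F` minimizes
`‖· - X‖_F` over `F` iff `W Q` minimizes `‖· - X Q‖_F` over `F`; in particular
`Π_F(X Q) = Π_F(X) Q` as sets of minimizers. -/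
theorem stmt6 {n K d m : ℕ}
    (Q : Matrix (Fin K × Fin d) (Fin K × Fin d) ℝ) (hQ : InPK IsOrthoMat Q)
    (X : Matrix (Fin n × Fin d) (Fin K × Fin d) ℝ) :
    (∀ W, InF m W →
      ((∀ W', InF m W' → frobNorm (W - X) ≤ frobNorm (W' - X)) ↔
        (∀ W', InF m W' → frobNorm (W * Q - X * Q) ≤ frobNorm (W' - X * Q)))) ∧
    {W' | InF m W' ∧ ∀ W'', InF m W'' → frobNorm (W' - X * Q) ≤ frobNorm (W'' - X * Q)}
      = (fun W => W * Q) ''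
        {W | InF m W ∧ ∀ W'', InF m W'' → frobNorm (W - X) ≤ frobNorm (W'' - X)} := by
  have hQQt : Q * Qᵀ = 1 := pk_mul_transpose_eq_one hQ
  have hQt : InPK IsOrthoMat Qᵀ := pk_transpose hQ
  have hQtQ : Qᵀ * Q = 1 := by
    have := pk_mul_transpose_eq_one hQt
    rwa [Matrix.transpose_transpose] at this
  have hfQ : ∀ A : Matrix (Fin n × Fin d) (Fin K × Fin d) ℝ,
      frobNorm (A * Q) = frobNorm A := fun A => frob_mul_ortho A hQQt
  have hcan : ∀ A : Matrix (Fin n × Fin d) (Fin K × Fin d) ℝ, A * Qᵀ * Q = A := by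
    intro A; rw [Matrix.mul_assoc, hQtQ, Matrix.mul_one]
  have hcan2 : ∀ A : Matrix (Fin n × Fin d) (Fin K × Fin d) ℝ, A * Q * Qᵀ = A := by
    intro A; rw [Matrix.mul_assoc, hQQt, Matrix.mul_one]
  have part1 : ∀ W, InF m W →
      ((∀ W', InF m W' → frobNorm (W - X) ≤ frobNorm (W' - X)) ↔
        (∀ W', InF m W' → frobNorm (W * Q - X * Q) ≤ frobNorm (W' - X * Q))) := by
    intro W _hW
    constructor
    · intro h W' hW'
      calc frobNorm (W * Q - X * Q) = frobNorm ((W - X) * Q) := by rw [Matrix.sub_mul]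
        _ = frobNorm (W - X) := hfQ _
        _ ≤ frobNorm (W' * Qᵀ - X) := h (W' * Qᵀ) (inF_mul_pk hW' hQt)
        _ = frobNorm ((W' * Qᵀ - X) * Q) := (hfQ _).symm
        _ = frobNorm (W' - X * Q) := by rw [Matrix.sub_mul, hcan]
    · intro h W' hW'
      calc frobNorm (W - X) = frobNorm ((W - X) * Q) := (hfQ _).symm
        _ = frobNorm (W * Q - X * Q) := by rw [Matrix.sub_mul]
        _ ≤ frobNorm (W' * Q - X * Q) := h (W' * Q) (inF_mul_pk hW' hQ)
        _ = frobNorm ((W' - X) * Q) := by rw [Matrix.sub_mul]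
        _ = frobNorm (W' - X) := hfQ _
  refine ⟨part1, ?_⟩
  ext W'
  simp only [Set.mem_setOf_eq, Set.mem_image]
  constructor
  · rintro ⟨hW', hmin⟩
    refine ⟨W' * Qᵀ, ⟨inF_mul_pk hW' hQt, fun W'' hW'' => ?_⟩, hcan W'⟩
    calc frobNorm (W' * Qᵀ - X) = frobNorm ((W' * Qᵀ - X) * Q) := (hfQ _).symm
      _ = frobNorm (W' - X * Q) := by rw [Matrix.sub_mul, hcan]
      _ ≤ frobNorm (W'' * Q - X * Q) := hmin (W'' * Q) (inF_mul_pk hW'' hQ)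
      _ = frobNorm ((W'' - X) * Q) := by rw [Matrix.sub_mul]
      _ = frobNorm (W'' - X) := hfQ _
  · rintro ⟨W₀, ⟨hW₀, hmin⟩, rfl⟩
    exact ⟨inF_mul_pk hW₀ hQ, (part1 W₀ hW₀).mp hmin⟩
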